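/- Let X₁ ~ Poisson(λ) and X₂ ~ Poisson(λ) be independent, and let r ∈ ℕ, r ≥ 1. Then there exists a constant C_r depending only on r such that E[(X₁ - X₂)^{2r}] ≤ C_r (λ^r + λ). -/

import Mathlib

open MeasureTheory
set_option maxHeartbeats 1000000

/-- The probability mass function of the Poisson distribution with parameter `lam`. -/
noncomputable def poissonPMF (lam : ℝ) (k : ℕ) : ℝ :=
  Real.exp (-lam) * lam ^ k / Nat.factorial k

namespace Skel

lemma pmf_nonneg {lam : ℝ} (hl : 0 ≤ lam) (k : ℕ) : 0 ≤ poissonPMF lam k := by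
  unfold poissonPMF
  positivity

lemma succ_mul_pmf (lam : ℝ) (k : ℕ) :
    ((k : ℝ) + 1) * poissonPMF lam (k + 1) = lam * poissonPMF lam k := by
  unfold poissonPMF
  rw [Nat.factorial_succ]
  push_cast
  have h : ((k : ℝ) + 1) ≠ 0 := by positivity
  field_simp
  ring

lemma summable_aux (m : ℕ) : Summable (fun k : ℕ => ((k : ℝ) + 1) ^ m * (1/2 : ℝ) ^ k) := by
  have h := summable_pow_mul_geometric_of_norm_lt_one (R := ℝ) m (r := 1/2) (by norm_num)
  have h2 : Summable (fun k : ℕ => ((k+1 : ℕ) : ℝ) ^ m * (1/2 : ℝ) ^ (k+1)) :=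
    (summable_nat_add_iff 1).2 h
  have h3 := h2.mul_left (2 : ℝ)
  apply h3.congr
  intro k
  push_cast
  ring

lemma summable_pm {lam : ℝ} (hl : 0 < lam) (m : ℕ) :
    Summable (fun k : ℕ => poissonPMF lam k * ((k : ℝ) + 1) ^ m) := by
  set B : ℝ := ∑' n : ℕ, (2 * lam) ^ n / n.factorial with hB
  have hsum2 : Summable (fun n : ℕ => (2 * lam) ^ n / n.factorial) :=
    Real.summable_pow_div_factorial (2 * lam)
  have hBk : ∀ k : ℕ, (2 * lam) ^ k / k.factorial ≤ B := by
    intro k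
    exact Summable.le_tsum hsum2 k (fun j _ => by positivity)
  refine Summable.of_nonneg_of_le
    (f := fun k : ℕ => (Real.exp (-lam) * B) * (((k:ℝ)+1)^m * (1/2:ℝ)^k))
    (fun k => mul_nonneg (pmf_nonneg hl.le k) (by positivity)) ?_ ((summable_aux m).mul_left _)
  intro k
  unfold poissonPMF
  have key : lam ^ k / k.factorial ≤ B * (1/2:ℝ)^k := by
    have : lam ^ k / k.factorial = (1/2:ℝ)^k * ((2*lam)^k / k.factorial) := by
      rw [mul_pow]
      field_simp
      rw [← mul_pow]; norm_num
    rw [this]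
    calc (1/2:ℝ)^k * ((2*lam)^k / k.factorial) ≤ (1/2:ℝ)^k * B := by
          apply mul_le_mul_of_nonneg_left (hBk k) (by positivity)
      _ = B * (1/2:ℝ)^k := by ring
  calc Real.exp (-lam) * lam ^ k / k.factorial * ((k:ℝ)+1)^m
      = Real.exp (-lam) * (lam ^ k / k.factorial) * ((k:ℝ)+1)^m := by ring
    _ ≤ Real.exp (-lam) * (B * (1/2:ℝ)^k) * ((k:ℝ)+1)^m := by
        apply mul_le_mul_of_nonneg_right _ (by positivity)
        exact mul_le_mul_of_nonneg_left key (Real.exp_pos _).le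
    _ = (Real.exp (-lam) * B) * (((k:ℝ)+1)^m * (1/2:ℝ)^k) := by ring

lemma tsum_pmf_le_one {lam : ℝ} (hl : 0 < lam) : ∑' k : ℕ, poissonPMF lam k ≤ 1 := by
  have h : ∑' k : ℕ, lam ^ k / (k.factorial : ℝ) = Real.exp lam := by
    rw [Real.exp_eq_exp_ℝ, NormedSpace.exp_eq_tsum_div]
  have : ∑' k : ℕ, poissonPMF lam k = Real.exp (-lam) * Real.exp lam := by
    rw [← h, ← tsum_mul_left]
    apply tsum_congr
    intro k
    unfold poissonPMF
    ring
  rw [this, ← Real.exp_add]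
  simp


noncomputable def nu (lam : ℝ) (m : ℕ) : ℝ :=
  ∑' p : ℕ × ℕ, poissonPMF lam p.1 * poissonPMF lam p.2 * ((p.1 : ℝ) - p.2) ^ m

lemma summable_master {lam : ℝ} (hl : 0 < lam) (m : ℕ) :
    Summable (fun p : ℕ × ℕ =>
      (poissonPMF lam p.1 * ((p.1 : ℝ) + 1) ^ m) * (poissonPMF lam p.2 * ((p.2 : ℝ) + 1) ^ m)) :=
  Summable.mul_of_nonneg (summable_pm hl m) (summable_pm hl m)
    (fun k => mul_nonneg (pmf_nonneg hl.le k) (by positivity))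
    (fun k => mul_nonneg (pmf_nonneg hl.le k) (by positivity))

lemma summable_of_bound {lam : ℝ} (hl : 0 < lam) (m : ℕ) {f : ℕ × ℕ → ℝ}
    (h : ∀ p : ℕ × ℕ, |f p| ≤ poissonPMF lam p.1 * poissonPMF lam p.2 *
      (((p.1 : ℝ) + 1) * ((p.2 : ℝ) + 1)) ^ m) : Summable f := by
  apply Summable.of_abs
  refine Summable.of_nonneg_of_le (fun p => abs_nonneg _) ?_ (summable_master hl m)
  intro p
  refine (h p).trans (le_of_eq ?_)
  rw [mul_pow]
  ring

lemma abs_sub_le_bound (k l : ℕ) (c : ℝ) (hc : 0 ≤ c) (hc1 : c ≤ 1) :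
    |((k : ℝ) - l + c)| ≤ ((k : ℝ) + 1) * ((l : ℝ) + 1) := by
  have h1 : |((k : ℝ) - l + c)| ≤ (k : ℝ) + l + 1 := by
    calc |((k : ℝ) - l + c)| ≤ |((k : ℝ) - l)| + |c| := abs_add_le _ _
      _ ≤ ((k : ℝ) + l) + 1 := by
          gcongr
          · exact abs_sub (k : ℝ) l |>.trans (by simp [abs_of_nonneg, Nat.cast_nonneg])
          · rw [abs_of_nonneg hc]; exact hc1
  refine h1.trans ?_
  have hk : (0:ℝ) ≤ k := Nat.cast_nonneg k
  have hlnn : (0:ℝ) ≤ l := Nat.cast_nonneg l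
  nlinarith


lemma abs_shift_le {lam : ℝ} (k l : ℕ) (c : ℝ) (hc : |c| ≤ 1) :
    |((k : ℝ) - l + c)| ≤ ((k : ℝ) + 1) * ((l : ℝ) + 1) := by
  have h1 : |((k : ℝ) - l + c)| ≤ (k : ℝ) + l + 1 := by
    calc |((k : ℝ) - l + c)| ≤ |((k : ℝ) - l)| + |c| := abs_add_le _ _
      _ ≤ ((k : ℝ) + l) + 1 := by
          gcongr
          exact abs_sub (k : ℝ) l |>.trans (by simp [abs_of_nonneg, Nat.cast_nonneg])
  refine h1.trans ?_
  have hk : (0:ℝ) ≤ k := Nat.cast_nonneg k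
  have hlnn : (0:ℝ) ≤ l := Nat.cast_nonneg l
  nlinarith

lemma summable_d {lam : ℝ} (hl : 0 < lam) (j : ℕ) :
    Summable (fun p : ℕ × ℕ =>
      poissonPMF lam p.1 * poissonPMF lam p.2 * ((p.1 : ℝ) - p.2) ^ j) := by
  apply summable_of_bound hl j
  intro p
  rw [abs_mul, abs_of_nonneg (mul_nonneg (pmf_nonneg hl.le _) (pmf_nonneg hl.le _)), abs_pow]
  have hb := abs_shift_le (lam := lam) p.1 p.2 0 (by norm_num)
  simp only [add_zero] at hb
  exact mul_le_mul_of_nonneg_left (pow_le_pow_left₀ (abs_nonneg _) hb j)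
    (mul_nonneg (pmf_nonneg hl.le _) (pmf_nonneg hl.le _))

lemma summable_shift {lam : ℝ} (hl : 0 < lam) (m : ℕ) (c : ℝ) (hc : |c| ≤ 1) :
    Summable (fun p : ℕ × ℕ =>
      poissonPMF lam p.1 * poissonPMF lam p.2 * ((p.1 : ℝ) - p.2 + c) ^ m) := by
  apply summable_of_bound hl m
  intro p
  rw [abs_mul, abs_of_nonneg (mul_nonneg (pmf_nonneg hl.le _) (pmf_nonneg hl.le _)), abs_pow]
  exact mul_le_mul_of_nonneg_left (pow_le_pow_left₀ (abs_nonneg _) (abs_shift_le (lam := lam) p.1 p.2 c hc) m)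
    (mul_nonneg (pmf_nonneg hl.le _) (pmf_nonneg hl.le _))

lemma summable_k {lam : ℝ} (hl : 0 < lam) (m : ℕ) :
    Summable (fun p : ℕ × ℕ =>
      (p.1 : ℝ) * (poissonPMF lam p.1 * poissonPMF lam p.2 * ((p.1 : ℝ) - p.2) ^ m)) := by
  apply summable_of_bound hl (m + 1)
  intro p
  obtain ⟨k, l⟩ := p
  have hb := abs_shift_le (lam := lam) k l 0 (by norm_num)
  simp only [add_zero] at hb
  rw [abs_mul, abs_mul, abs_of_nonneg (mul_nonneg (pmf_nonneg hl.le _) (pmf_nonneg hl.le _)),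
    abs_pow, Nat.abs_cast]
  have h1 : (0:ℝ) ≤ ((k:ℝ)+1)*((l:ℝ)+1) := by positivity
  calc (k:ℝ) * (poissonPMF lam k * poissonPMF lam l * |(k:ℝ) - l| ^ m)
      ≤ (((k:ℝ)+1)*((l:ℝ)+1)) * (poissonPMF lam k * poissonPMF lam l * (((k:ℝ)+1)*((l:ℝ)+1)) ^ m) := by
        have hk1 : (k:ℝ) ≤ ((k:ℝ)+1)*((l:ℝ)+1) := by nlinarith [Nat.cast_nonneg (α := ℝ) k, Nat.cast_nonneg (α := ℝ) l]
        have hdm : |(k:ℝ) - l| ^ m ≤ (((k:ℝ)+1)*((l:ℝ)+1)) ^ m :=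
          pow_le_pow_left₀ (abs_nonneg _) hb m
        have h2 : (0:ℝ) ≤ poissonPMF lam k * poissonPMF lam l :=
          mul_nonneg (pmf_nonneg hl.le _) (pmf_nonneg hl.le _)
        calc (k:ℝ) * (poissonPMF lam k * poissonPMF lam l * |(k:ℝ) - l| ^ m)
            ≤ (k:ℝ) * (poissonPMF lam k * poissonPMF lam l * (((k:ℝ)+1)*((l:ℝ)+1)) ^ m) := by
              apply mul_le_mul_of_nonneg_left _ (Nat.cast_nonneg k)
              exact mul_le_mul_of_nonneg_left hdm h2
          _ ≤ (((k:ℝ)+1)*((l:ℝ)+1)) * (poissonPMF lam k * poissonPMF lam l * (((k:ℝ)+1)*((l:ℝ)+1)) ^ m) := by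
              apply mul_le_mul_of_nonneg_right hk1 (by positivity)
    _ = poissonPMF lam k * poissonPMF lam l * (((k:ℝ)+1)*((l:ℝ)+1)) ^ (m+1) := by ring

lemma summable_l {lam : ℝ} (hl : 0 < lam) (m : ℕ) :
    Summable (fun p : ℕ × ℕ =>
      (p.2 : ℝ) * (poissonPMF lam p.1 * poissonPMF lam p.2 * ((p.1 : ℝ) - p.2) ^ m)) := by
  apply summable_of_bound hl (m + 1)
  intro p
  obtain ⟨k, l⟩ := p
  have hb := abs_shift_le (lam := lam) k l 0 (by norm_num)
  simp only [add_zero] at hb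
  rw [abs_mul, abs_mul, abs_of_nonneg (mul_nonneg (pmf_nonneg hl.le _) (pmf_nonneg hl.le _)),
    abs_pow, Nat.abs_cast]
  have hk1 : (l:ℝ) ≤ ((k:ℝ)+1)*((l:ℝ)+1) := by nlinarith [Nat.cast_nonneg (α := ℝ) k, Nat.cast_nonneg (α := ℝ) l]
  have h2 : (0:ℝ) ≤ poissonPMF lam k * poissonPMF lam l :=
    mul_nonneg (pmf_nonneg hl.le _) (pmf_nonneg hl.le _)
  have hdm : |(k:ℝ) - l| ^ m ≤ (((k:ℝ)+1)*((l:ℝ)+1)) ^ m :=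
    pow_le_pow_left₀ (abs_nonneg _) hb m
  calc (l:ℝ) * (poissonPMF lam k * poissonPMF lam l * |(k:ℝ) - l| ^ m)
      ≤ (l:ℝ) * (poissonPMF lam k * poissonPMF lam l * (((k:ℝ)+1)*((l:ℝ)+1)) ^ m) := by
        apply mul_le_mul_of_nonneg_left _ (Nat.cast_nonneg l)
        exact mul_le_mul_of_nonneg_left hdm h2
    _ ≤ (((k:ℝ)+1)*((l:ℝ)+1)) * (poissonPMF lam k * poissonPMF lam l * (((k:ℝ)+1)*((l:ℝ)+1)) ^ m) := by
        apply mul_le_mul_of_nonneg_right hk1 (by positivity)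
    _ = poissonPMF lam k * poissonPMF lam l * (((k:ℝ)+1)*((l:ℝ)+1)) ^ (m+1) := by ring


lemma nu_rec {lam : ℝ} (hl : 0 < lam) (m : ℕ) :
    nu lam (m + 1) = lam * ∑ j ∈ Finset.range (m + 1),
      (Nat.choose m j : ℝ) * (1 - (-1 : ℝ) ^ (m - j)) * nu lam j := by
  have hsplit : nu lam (m + 1) =
      (∑' p : ℕ × ℕ, (p.1 : ℝ) * (poissonPMF lam p.1 * poissonPMF lam p.2 * ((p.1 : ℝ) - p.2) ^ m))
      - (∑' p : ℕ × ℕ, (p.2 : ℝ) * (poissonPMF lam p.1 * poissonPMF lam p.2 * ((p.1 : ℝ) - p.2) ^ m)) := by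
    rw [nu, ← Summable.tsum_sub (summable_k hl m) (summable_l hl m)]
    apply tsum_congr
    intro p
    ring
  have eA : (∑' p : ℕ × ℕ, (p.1 : ℝ) * (poissonPMF lam p.1 * poissonPMF lam p.2 * ((p.1 : ℝ) - p.2) ^ m))
      = lam * ∑' p : ℕ × ℕ, poissonPMF lam p.1 * poissonPMF lam p.2 * ((p.1 : ℝ) - p.2 + 1) ^ m := by
    have hinj : Function.Injective (fun p : ℕ × ℕ => (p.1 + 1, p.2)) := by
      intro p q h
      simp only [Prod.mk.injEq, Nat.succ_inj] at h
      exact Prod.ext h.1 h.2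
    have hsupp : Function.support
        (fun p : ℕ × ℕ => (p.1 : ℝ) * (poissonPMF lam p.1 * poissonPMF lam p.2 * ((p.1 : ℝ) - p.2) ^ m))
        ⊆ Set.range (fun p : ℕ × ℕ => (p.1 + 1, p.2)) := by
      intro p hp
      rcases Nat.eq_zero_or_pos p.1 with h0 | hpos
      · exfalso; apply hp; simp [h0]
      · exact ⟨(p.1 - 1, p.2), by
          simp only [Prod.mk.injEq]
          exact Prod.ext (by simp [Nat.sub_add_cancel hpos]) rfl⟩
    rw [← Function.Injective.tsum_eq hinj hsupp, ← tsum_mul_left]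
    apply tsum_congr
    intro p
    obtain ⟨k, l⟩ := p
    have hkey := succ_mul_pmf lam k
    push_cast
    calc ((k : ℝ) + 1) * (poissonPMF lam (k + 1) * poissonPMF lam l * ((k : ℝ) + 1 - l) ^ m)
        = (((k : ℝ) + 1) * poissonPMF lam (k + 1)) * (poissonPMF lam l * ((k : ℝ) + 1 - l) ^ m) := by ring
      _ = (lam * poissonPMF lam k) * (poissonPMF lam l * ((k : ℝ) + 1 - l) ^ m) := by rw [hkey]
      _ = lam * (poissonPMF lam k * poissonPMF lam l * ((k : ℝ) - l + 1) ^ m) := by ring_nf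
  have eB : (∑' p : ℕ × ℕ, (p.2 : ℝ) * (poissonPMF lam p.1 * poissonPMF lam p.2 * ((p.1 : ℝ) - p.2) ^ m))
      = lam * ∑' p : ℕ × ℕ, poissonPMF lam p.1 * poissonPMF lam p.2 * ((p.1 : ℝ) - p.2 + (-1)) ^ m := by
    have hinj : Function.Injective (fun p : ℕ × ℕ => (p.1, p.2 + 1)) := by
      intro p q h
      simp only [Prod.mk.injEq, Nat.succ_inj] at h
      exact Prod.ext h.1 h.2
    have hsupp : Function.support
        (fun p : ℕ × ℕ => (p.2 : ℝ) * (poissonPMF lam p.1 * poissonPMF lam p.2 * ((p.1 : ℝ) - p.2) ^ m))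
        ⊆ Set.range (fun p : ℕ × ℕ => (p.1, p.2 + 1)) := by
      intro p hp
      rcases Nat.eq_zero_or_pos p.2 with h0 | hpos
      · exfalso; apply hp; simp [h0]
      · exact ⟨(p.1, p.2 - 1), by
          simp only [Prod.mk.injEq]
          exact Prod.ext rfl (by simp [Nat.sub_add_cancel hpos])⟩
    rw [← Function.Injective.tsum_eq hinj hsupp, ← tsum_mul_left]
    apply tsum_congr
    intro p
    obtain ⟨k, l⟩ := p
    have hkey := succ_mul_pmf lam l
    push_cast
    calc ((l : ℝ) + 1) * (poissonPMF lam k * poissonPMF lam (l + 1) * ((k : ℝ) - ((l : ℝ) + 1)) ^ m)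
        = (((l : ℝ) + 1) * poissonPMF lam (l + 1)) * (poissonPMF lam k * ((k : ℝ) - ((l : ℝ) + 1)) ^ m) := by ring
      _ = (lam * poissonPMF lam l) * (poissonPMF lam k * ((k : ℝ) - ((l : ℝ) + 1)) ^ m) := by rw [hkey]
      _ = lam * (poissonPMF lam k * poissonPMF lam l * ((k : ℝ) - l + (-1)) ^ m) := by ring_nf
  rw [hsplit, eA, eB, ← mul_sub]
  congr 1
  rw [← Summable.tsum_sub (summable_shift hl m 1 (by norm_num)) (summable_shift hl m (-1) (by norm_num))]
  have hpt : ∀ p : ℕ × ℕ,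
      poissonPMF lam p.1 * poissonPMF lam p.2 * ((p.1 : ℝ) - p.2 + 1) ^ m
      - poissonPMF lam p.1 * poissonPMF lam p.2 * ((p.1 : ℝ) - p.2 + (-1)) ^ m
      = ∑ j ∈ Finset.range (m + 1), (Nat.choose m j : ℝ) * (1 - (-1 : ℝ) ^ (m - j)) *
          (poissonPMF lam p.1 * poissonPMF lam p.2 * ((p.1 : ℝ) - p.2) ^ j) := by
    intro p
    set d : ℝ := (p.1 : ℝ) - p.2 with hd
    have h1 : (d + 1) ^ m = ∑ j ∈ Finset.range (m + 1), d ^ j * (1:ℝ) ^ (m - j) * (Nat.choose m j : ℝ) :=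
      add_pow d 1 m
    have h2 : (d + (-1)) ^ m = ∑ j ∈ Finset.range (m + 1), d ^ j * (-1:ℝ) ^ (m - j) * (Nat.choose m j : ℝ) :=
      add_pow d (-1) m
    rw [h1, h2, Finset.mul_sum, Finset.mul_sum, ← Finset.sum_sub_distrib]
    apply Finset.sum_congr rfl
    intro j _
    ring
  calc (∑' p : ℕ × ℕ, (poissonPMF lam p.1 * poissonPMF lam p.2 * ((p.1 : ℝ) - p.2 + 1) ^ m
          - poissonPMF lam p.1 * poissonPMF lam p.2 * ((p.1 : ℝ) - p.2 + (-1)) ^ m))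
      = ∑' p : ℕ × ℕ, ∑ j ∈ Finset.range (m + 1), (Nat.choose m j : ℝ) * (1 - (-1 : ℝ) ^ (m - j)) *
          (poissonPMF lam p.1 * poissonPMF lam p.2 * ((p.1 : ℝ) - p.2) ^ j) := tsum_congr hpt
    _ = ∑ j ∈ Finset.range (m + 1), ∑' p : ℕ × ℕ, (Nat.choose m j : ℝ) * (1 - (-1 : ℝ) ^ (m - j)) *
          (poissonPMF lam p.1 * poissonPMF lam p.2 * ((p.1 : ℝ) - p.2) ^ j) := by
        apply Summable.tsum_finsetSum
        intro j _
        exact (summable_d hl j).mul_left _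
    _ = ∑ j ∈ Finset.range (m + 1), (Nat.choose m j : ℝ) * (1 - (-1 : ℝ) ^ (m - j)) * nu lam j := by
        apply Finset.sum_congr rfl
        intro j _
        rw [tsum_mul_left, nu]


lemma nu_even_nonneg {lam : ℝ} (hl : 0 < lam) (s : ℕ) : 0 ≤ nu lam (2 * s) := by
  apply tsum_nonneg
  intro p
  apply mul_nonneg (mul_nonneg (pmf_nonneg hl.le _) (pmf_nonneg hl.le _))
  exact (even_two_mul s).pow_nonneg _

lemma nu_odd_eq_zero {lam : ℝ} (hl : 0 < lam) {m : ℕ} (hm : Odd m) : nu lam m = 0 := by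
  have key : nu lam m = - nu lam m := by
    conv_lhs => rw [nu, ← (Equiv.prodComm ℕ ℕ).tsum_eq]
    rw [nu, ← tsum_neg]
    apply tsum_congr
    intro p
    simp only [Equiv.prodComm_apply, Prod.snd_swap, Prod.fst_swap]
    have : ((p.2 : ℝ) - p.1) ^ m = - ((p.1 : ℝ) - p.2) ^ m := by
      rw [show ((p.2 : ℝ) - p.1) = -((p.1 : ℝ) - p.2) by ring, hm.neg_pow]
    rw [this]
    ring
  linarith

lemma nu_nonneg {lam : ℝ} (hl : 0 < lam) (j : ℕ) : 0 ≤ nu lam j := by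
  rcases Nat.even_or_odd j with ⟨s, hs⟩ | ho
  · have : j = 2 * s := by omega
    rw [this]; exact nu_even_nonneg hl s
  · rw [nu_odd_eq_zero hl ho]

lemma nu_zero_le_one {lam : ℝ} (hl : 0 < lam) : nu lam 0 ≤ 1 := by
  have hs : Summable (fun k : ℕ => poissonPMF lam k) := by
    have := summable_pm hl 0
    simpa using this
  have hprod : Summable (fun p : ℕ × ℕ => poissonPMF lam p.1 * poissonPMF lam p.2) :=
    Summable.mul_of_nonneg hs hs (fun k => pmf_nonneg hl.le k) (fun k => pmf_nonneg hl.le k)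
  have h0 : nu lam 0 = (∑' k : ℕ, poissonPMF lam k) * (∑' k : ℕ, poissonPMF lam k) := by
    rw [nu, Summable.tsum_mul_tsum hs hs hprod]
    simp
  rw [h0]
  have h1 := tsum_pmf_le_one hl
  have h2 : 0 ≤ ∑' k : ℕ, poissonPMF lam k := tsum_nonneg (fun k => pmf_nonneg hl.le k)
  nlinarith

/-- the bound function -/
noncomputable def bb (lam : ℝ) (j : ℕ) : ℝ :=
  if j = 0 then 1 else 8 ^ j * (Nat.factorial j : ℝ) * (lam ^ (j / 2) + lam)

lemma bb_nonneg {lam : ℝ} (hl : 0 < lam) (j : ℕ) : 0 ≤ bb lam j := by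
  unfold bb
  split
  · norm_num
  · positivity

lemma pow_le_pow_add {lam : ℝ} (hl : 0 < lam) {e s : ℕ} (he1 : 1 ≤ e) (hes : e ≤ s) :
    lam ^ e ≤ lam ^ s + lam := by
  rcases le_or_gt 1 lam with h | h
  · have : lam ^ e ≤ lam ^ s := pow_le_pow_right₀ h hes
    linarith
  · have : lam ^ e ≤ lam ^ 1 := pow_le_pow_of_le_one hl.le h.le he1
    simp only [pow_one] at this
    have hp : 0 < lam ^ s := pow_pos hl s
    linarith


lemma coeff_cases (e : ℕ) : (1 - (-1 : ℝ) ^ e) = 0 ∨ (1 - (-1 : ℝ) ^ e) = 2 := by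
  rcases Nat.even_or_odd e with he | he
  · left; rw [he.neg_one_pow]; ring
  · right; rw [he.neg_one_pow]; ring

lemma choose_mul_factorial_le (n i : ℕ) (h : i ≤ n) :
    (n.choose i : ℝ) * (Nat.factorial i : ℝ) ≤ (Nat.factorial n : ℝ) := by
  have := Nat.choose_mul_factorial_mul_factorial h
  have h1 : n.choose i * Nat.factorial i ≤ Nat.factorial n := by
    calc n.choose i * Nat.factorial i ≤ n.choose i * Nat.factorial i * Nat.factorial (n - i) :=
          Nat.le_mul_of_pos_right _ (Nat.factorial_pos _)
      _ = Nat.factorial n := this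
  exact_mod_cast h1

lemma geom_sum_le (n : ℕ) : ∑ i ∈ Finset.range n, (8 : ℝ) ^ i ≤ 8 ^ n := by
  rw [geom_sum_eq (by norm_num : (8:ℝ) ≠ 1)]
  have h : (0:ℝ) < 8 ^ n := by positivity
  nlinarith

lemma nu_le_bb {lam : ℝ} (hl : 0 < lam) : ∀ j : ℕ, nu lam j ≤ bb lam j := by
  intro j
  induction j using Nat.strong_induction_on with
  | _ j ih =>
    rcases Nat.eq_zero_or_pos j with rfl | hj
    · rw [show bb lam 0 = 1 from if_pos rfl]
      exact nu_zero_le_one hl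
    rcases Nat.even_or_odd j with ⟨s, hs⟩ | ho
    swap
    · rw [nu_odd_eq_zero hl ho]; exact bb_nonneg hl j
    · -- j = 2s, s ≥ 1
      have hs1 : 1 ≤ s := by omega
      have hj2 : j = (2 * s - 1) + 1 := by omega
      set m : ℕ := 2 * s - 1 with hm
      have hrec := nu_rec hl m
      rcases eq_or_lt_of_le hs1 with hseq | hs2
      · -- s = 1, j = 2
        have hj2' : j = 2 := by omega
        have hm1 : m = 1 := by omega
        subst hj2'
        rw [show (2:ℕ) = 1 + 1 by rfl]
        have : nu lam (1 + 1) = lam * (2 * nu lam 0) := by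
          rw [nu_rec hl 1]
          congr 1
          rw [Finset.sum_range_succ, Finset.sum_range_succ, Finset.sum_range_zero]
          norm_num
        rw [this]
        have h0 : nu lam 0 ≤ 1 := nu_zero_le_one hl
        have h0' : 0 ≤ nu lam 0 := nu_nonneg hl 0
        have hbb : bb lam (1+1) = 8 ^ 2 * 2 * (lam + lam) := by
          rw [bb]; norm_num [Nat.factorial]
        rw [hbb]
        nlinarith
      · -- s ≥ 2
        have hs2' : 2 ≤ s := hs2
        set L : ℝ := lam ^ s + lam with hL
        have hLpos : 0 < L := by positivity
        have key : ∀ i ∈ Finset.range (m + 1),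
            (Nat.choose m i : ℝ) * (1 - (-1 : ℝ) ^ (m - i)) * nu lam i
              ≤ (Nat.choose m i : ℝ) * (2 * bb lam i) := by
          intro i hi
          have hile : i < j := by
            simp only [Finset.mem_range] at hi; omega
          have hnb := ih i hile
          have hnn := nu_nonneg hl i
          have hbn := bb_nonneg hl i
          have hcn : (0:ℝ) ≤ (Nat.choose m i : ℝ) := Nat.cast_nonneg _
          rcases coeff_cases (m - i) with h | h <;> rw [h] <;> nlinarith
        have hlambb : ∀ i ∈ Finset.range (m + 1),
            lam * bb lam i ≤ 2 * 8 ^ i * (Nat.factorial i : ℝ) * L := by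
          intro i hi
          simp only [Finset.mem_range] at hi
          rcases Nat.eq_zero_or_pos i with rfl | hipos
          · rw [show bb lam 0 = 1 from if_pos rfl]
            simp only [pow_zero, Nat.factorial_zero, Nat.cast_one]
            have h1 : lam ≤ L := by
              have : 0 < lam ^ s := pow_pos hl s
              rw [hL]; linarith
            nlinarith
          · rw [bb, if_neg (by omega)]
            have he1 : lam ^ (i / 2 + 1) ≤ L := by
              apply pow_le_pow_add hl (by omega) (by omega)
            have he2 : lam ^ 2 ≤ L := pow_le_pow_add hl (by omega) (by omega)
            have hfac : (0:ℝ) ≤ 8 ^ i * (Nat.factorial i : ℝ) := by positivity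
            have expand : lam * (8 ^ i * (Nat.factorial i : ℝ) * (lam ^ (i / 2) + lam))
                = 8 ^ i * (Nat.factorial i : ℝ) * (lam ^ (i / 2 + 1) + lam ^ 2) := by
              ring
            rw [expand]
            calc 8 ^ i * (Nat.factorial i : ℝ) * (lam ^ (i / 2 + 1) + lam ^ 2)
                ≤ 8 ^ i * (Nat.factorial i : ℝ) * (L + L) := by
                  apply mul_le_mul_of_nonneg_left _ hfac
                  linarith
              _ = 2 * 8 ^ i * (Nat.factorial i : ℝ) * L := by ring
        calc nu lam j = lam * ∑ i ∈ Finset.range (m + 1),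
              (Nat.choose m i : ℝ) * (1 - (-1 : ℝ) ^ (m - i)) * nu lam i := by rw [hj2, hrec]
          _ ≤ lam * ∑ i ∈ Finset.range (m + 1), (Nat.choose m i : ℝ) * (2 * bb lam i) := by
              apply mul_le_mul_of_nonneg_left (Finset.sum_le_sum key) hl.le
          _ = ∑ i ∈ Finset.range (m + 1), 2 * (Nat.choose m i : ℝ) * (lam * bb lam i) := by
              rw [Finset.mul_sum]
              apply Finset.sum_congr rfl
              intro i _
              ring
          _ ≤ ∑ i ∈ Finset.range (m + 1), 2 * (Nat.choose m i : ℝ) *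
                (2 * 8 ^ i * (Nat.factorial i : ℝ) * L) := by
              apply Finset.sum_le_sum
              intro i hi
              apply mul_le_mul_of_nonneg_left (hlambb i hi)
              positivity
          _ = ∑ i ∈ Finset.range (m + 1), 4 * ((Nat.choose m i : ℝ) * (Nat.factorial i : ℝ)) * 8 ^ i * L := by
              apply Finset.sum_congr rfl
              intro i _
              ring
          _ ≤ ∑ i ∈ Finset.range (m + 1), 4 * (Nat.factorial m : ℝ) * 8 ^ i * L := by
              apply Finset.sum_le_sum
              intro i hi
              simp only [Finset.mem_range] at hi
              have h1 := choose_mul_factorial_le m i (by omega)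
              have h2 : (0:ℝ) ≤ (8:ℝ) ^ i := by positivity
              have h3 := mul_le_mul_of_nonneg_right (mul_le_mul_of_nonneg_right h1 h2) hLpos.le
              nlinarith [h3]
          _ = 4 * (Nat.factorial m : ℝ) * L * ∑ i ∈ Finset.range (m + 1), (8:ℝ) ^ i := by
              rw [Finset.mul_sum]
              apply Finset.sum_congr rfl
              intro i _
              ring
          _ ≤ 4 * (Nat.factorial m : ℝ) * L * 8 ^ (m + 1) := by
              apply mul_le_mul_of_nonneg_left (geom_sum_le (m+1))
              positivity
          _ ≤ bb lam j := by
              rw [bb, if_neg (by omega)]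
              have hfj : (Nat.factorial j : ℝ) = (j : ℝ) * (Nat.factorial m : ℝ) := by
                rw [hj2, Nat.factorial_succ]
                push_cast
                ring
              have hjdiv : j / 2 = s := by omega
              rw [hjdiv, ← hL, hfj, hj2]
              have h4j : (4:ℝ) ≤ ((m:ℝ) + 1) := by
                have : (4:ℕ) ≤ m + 1 := by omega
                exact_mod_cast this
              have hfm : (0:ℝ) < (Nat.factorial m : ℝ) := by
                exact_mod_cast Nat.factorial_pos m
              have h8 : (0:ℝ) < 8 ^ (m+1) := by positivity
              push_cast
              nlinarith [mul_le_mul_of_nonneg_right (mul_le_mul_of_nonneg_right h4j hfm.le)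
                (mul_nonneg h8.le hLpos.le)]

end Skel
namespace Skel

lemma nu_main {lam : ℝ} (hl : 0 < lam) (r : ℕ) (hr : 1 ≤ r) :
    nu lam (2 * r) ≤ 8 ^ (2 * r) * (Nat.factorial (2 * r) : ℝ) * (lam ^ r + lam) := by
  have h := nu_le_bb hl (2 * r)
  rw [bb, if_neg (by omega)] at h
  have : (2 * r) / 2 = r := by omega
  rwa [this] at h

end Skel

open scoped ENNReal

/-- Even moments of the symmetric Skellam distribution: for independent Poisson(`lam`)
variables `X₁, X₂` and `r ≥ 1`, `E[(X₁ - X₂)^{2r}] ≤ C_r (lam^r + lam)`, with `C_r`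
depending only on `r`. -/
theorem stmt6 (r : ℕ) (hr : 1 ≤ r) :
    ∃ C : ℝ, 0 < C ∧
      ∀ (Ω : Type) (_ : MeasurableSpace Ω) (P : MeasureTheory.Measure Ω), IsProbabilityMeasure P →
        ∀ lam : ℝ, 0 < lam → ∀ X₁ X₂ : Ω → ℕ,
          (∀ k : ℕ, P {ω | X₁ ω = k} = ENNReal.ofReal (poissonPMF lam k)) →
          (∀ k : ℕ, P {ω | X₂ ω = k} = ENNReal.ofReal (poissonPMF lam k)) →
          ProbabilityTheory.IndepFun X₁ X₂ P →
          ∫ ω, ((X₁ ω : ℝ) - (X₂ ω : ℝ)) ^ (2 * r) ∂P ≤ C * (lam ^ r + lam) := by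
  refine ⟨8 ^ (2 * r) * (Nat.factorial (2 * r) : ℝ), by positivity, ?_⟩
  intro Ω mΩ P hP lam hlam X₁ X₂ h1 h2 hind
  set f : Ω → ℝ := fun ω => ((X₁ ω : ℝ) - (X₂ ω : ℝ)) ^ (2 * r) with hf
  have hf0 : ∀ ω, 0 ≤ f ω := fun ω => (even_two_mul r).pow_nonneg _
  have hRHS : (0:ℝ) < 8 ^ (2 * r) * (Nat.factorial (2 * r) : ℝ) * (lam ^ r + lam) := by positivity
  by_cases hint : Integrable f P
  swap
  · rw [show (∫ ω, ((X₁ ω : ℝ) - (X₂ ω : ℝ)) ^ (2 * r) ∂P) = ∫ ω, f ω ∂P from rfl,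
      integral_undef hint]
    linarith
  set c : ℕ × ℕ → ℝ := fun p => ((p.1 : ℝ) - (p.2 : ℝ)) ^ (2 * r) with hc
  set A : ℕ × ℕ → ℝ≥0∞ := fun p =>
    ENNReal.ofReal (poissonPMF lam p.1) * ENNReal.ofReal (poissonPMF lam p.2) with hA
  have hPA : ∀ p : ℕ × ℕ, P ({ω | X₁ ω = p.1} ∩ {ω | X₂ ω = p.2}) = A p := by
    intro p
    have heq : ({ω | X₁ ω = p.1} ∩ {ω | X₂ ω = p.2} : Set Ω)
        = X₁ ⁻¹' {p.1} ∩ X₂ ⁻¹' {p.2} := rfl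
    rw [heq, hind.measure_inter_preimage_eq_mul _ _ (measurableSet_singleton _)
      (measurableSet_singleton _)]
    rw [show X₁ ⁻¹' {p.1} = {ω | X₁ ω = p.1} from rfl,
      show X₂ ⁻¹' {p.2} = {ω | X₂ ω = p.2} from rfl, h1 p.1, h2 p.2]
  have tail : ∀ t : ℝ, P {a | t < f a} ≤
      ∑' p : ℕ × ℕ, (Set.Iio (c p)).indicator (fun _ => A p) t := by
    intro t
    have hsub : {a | t < f a} ⊆
        ⋃ p : ℕ × ℕ, (if t < c p then ({ω | X₁ ω = p.1} ∩ {ω | X₂ ω = p.2}) else (∅ : Set Ω)) := by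
      intro a ha
      refine Set.mem_iUnion.2 ⟨(X₁ a, X₂ a), ?_⟩
      rw [if_pos (by exact ha)]
      exact ⟨rfl, rfl⟩
    refine (measure_mono hsub).trans ((measure_iUnion_le _).trans (ENNReal.tsum_le_tsum ?_))
    intro p
    simp only [Set.indicator_apply, Set.mem_Iio]
    split_ifs with h
    · exact le_of_eq (hPA p)
    · simp
  calc ∫ ω, ((X₁ ω : ℝ) - (X₂ ω : ℝ)) ^ (2 * r) ∂P
      = (∫⁻ a, ENNReal.ofReal (f a) ∂P).toReal :=
        integral_eq_lintegral_of_nonneg_ae (Filter.Eventually.of_forall hf0)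
          hint.aestronglyMeasurable
    _ ≤ 8 ^ (2 * r) * (Nat.factorial (2 * r) : ℝ) * (lam ^ r + lam) := by
        apply ENNReal.toReal_le_of_le_ofReal hRHS.le
        rw [lintegral_eq_lintegral_meas_lt P (Filter.Eventually.of_forall hf0) hint.aemeasurable]
        calc ∫⁻ t in Set.Ioi 0, P {a | t < f a}
            ≤ ∫⁻ t in Set.Ioi 0, ∑' p : ℕ × ℕ, (Set.Iio (c p)).indicator (fun _ => A p) t :=
              lintegral_mono tail
          _ = ∑' p : ℕ × ℕ, ∫⁻ t in Set.Ioi 0, (Set.Iio (c p)).indicator (fun _ => A p) t :=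
              lintegral_tsum (fun p => ((measurable_const.indicator measurableSet_Iio).aemeasurable))
          _ = ∑' p : ℕ × ℕ, A p * ENNReal.ofReal (c p) := by
              apply tsum_congr
              intro p
              rw [lintegral_indicator measurableSet_Iio, setLIntegral_const,
                Measure.restrict_apply measurableSet_Iio, Set.Iio_inter_Ioi,
                Real.volume_Ioo, sub_zero]
          _ = ∑' p : ℕ × ℕ, ENNReal.ofReal (poissonPMF lam p.1 * poissonPMF lam p.2 * c p) := by
              apply tsum_congr
              intro p
              rw [ENNReal.ofReal_mul (mul_nonneg (Skel.pmf_nonneg hlam.le _) (Skel.pmf_nonneg hlam.le _)),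
                ENNReal.ofReal_mul (Skel.pmf_nonneg hlam.le _)]
          _ = ENNReal.ofReal (Skel.nu lam (2 * r)) := by
              refine (ENNReal.ofReal_tsum_of_nonneg (fun p => ?_) (Skel.summable_d hlam (2 * r))).symm
              exact mul_nonneg (mul_nonneg (Skel.pmf_nonneg hlam.le _) (Skel.pmf_nonneg hlam.le _))
                ((even_two_mul r).pow_nonneg _)
          _ ≤ ENNReal.ofReal (8 ^ (2 * r) * (Nat.factorial (2 * r) : ℝ) * (lam ^ r + lam)) :=
              ENNReal.ofReal_le_ofReal (Skel.nu_main hlam r hr)
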